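/- Let n ∈ ℕ, x₀ ∈ ℝ^n, r > 0, C ≥ 0, δ ≥ 0. Let u, v : ℝ^n → ℝ be such that u is convex, u and v are differentiable at x₀, and: (i) v(x₀ + y) − v(x₀) − y·∇v(x₀) ≤ C|y|² for all |y| ≤ r; (ii) |u(x₀ + y) − v(x₀ + y)| ≤ δ for all |y| ≤ r. Then for every λ ∈ (0, r], |∇u(x₀) − ∇v(x₀)| ≤ 2δ/λ + Cλ. In particular, if √δ ≤ r, then |∇u(x₀) − ∇v(x₀)| ≤ (2 + C)√δ. -/

import Mathlib

open scoped InnerProductSpace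

private lemma subgrad {n : ℕ} (x₀ : EuclideanSpace ℝ (Fin n))
    (u : EuclideanSpace ℝ (Fin n) → ℝ)
    (hu : ConvexOn ℝ Set.univ u) (hdu : DifferentiableAt ℝ u x₀)
    (y : EuclideanSpace ℝ (Fin n)) :
    ⟪y, gradient u x₀⟫_ℝ ≤ u (x₀ + y) - u x₀ := by
  set f : ℝ → ℝ := fun t => u (x₀ + t • y) with hf
  have hline : HasDerivAt (fun t : ℝ => x₀ + t • y) y 0 := by
    simpa using ((hasDerivAt_id (0:ℝ)).smul_const y).const_add x₀
  have hgrad : HasFDerivAt u (InnerProductSpace.toDual ℝ _ (gradient u x₀)) x₀ :=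
    hdu.hasGradientAt.hasFDerivAt
  have hgrad' : HasFDerivAt u (InnerProductSpace.toDual ℝ _ (gradient u x₀))
      (x₀ + (0:ℝ) • y) := by simpa using hgrad
  have hfd : HasDerivAt f (⟪y, gradient u x₀⟫_ℝ) 0 := by
    have := hgrad'.comp_hasDerivAt (0:ℝ) hline
    rw [InnerProductSpace.toDual_apply_apply, real_inner_comm] at this
    exact this
  have htend : Filter.Tendsto (slope f 0) (nhdsWithin (0:ℝ) (Set.Ioi 0))
      (nhds (⟪y, gradient u x₀⟫_ℝ)) :=
    (hasDerivAt_iff_tendsto_slope.mp hfd).mono_left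
      (nhdsWithin_mono _ (fun t ht => by
        simp only [Set.mem_compl_iff, Set.mem_singleton_iff]
        exact ne_of_gt ht))
  have hbound : ∀ᶠ t in nhdsWithin (0:ℝ) (Set.Ioi 0),
      slope f 0 t ≤ u (x₀ + y) - u x₀ := by
    filter_upwards [Ioc_mem_nhdsGT_of_mem (Set.left_mem_Ico.mpr one_pos)] with t ht
    obtain ⟨ht0, ht1⟩ := ht
    have hconv : u (x₀ + t • y) ≤ (1 - t) * u x₀ + t * u (x₀ + y) := by
      have h := hu.2 (Set.mem_univ x₀) (Set.mem_univ (x₀ + y))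
        (by linarith : (0:ℝ) ≤ 1 - t) (le_of_lt ht0) (by ring)
      have hpt : (1 - t) • x₀ + t • (x₀ + y) = x₀ + t • y := by
        rw [smul_add, sub_smul, one_smul]; abel
      rw [hpt] at h
      simpa [smul_eq_mul] using h
    have hft : f t - f 0 ≤ t * (u (x₀ + y) - u x₀) := by
      simp only [f, zero_smul, add_zero]
      nlinarith
    rw [slope_def_field, sub_zero, div_le_iff₀ ht0]
    linarith
  exact le_of_tendsto htend hbound

theorem stmt8 {n : ℕ} (x₀ : EuclideanSpace ℝ (Fin n)) (r C δ : ℝ)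
    (hr : 0 < r) (hC : 0 ≤ C) (hδ : 0 ≤ δ)
    (u v : EuclideanSpace ℝ (Fin n) → ℝ)
    (hu : ConvexOn ℝ Set.univ u)
    (hdu : DifferentiableAt ℝ u x₀) (hdv : DifferentiableAt ℝ v x₀)
    (hv : ∀ y : EuclideanSpace ℝ (Fin n), ‖y‖ ≤ r →
      v (x₀ + y) - v x₀ - ⟪y, gradient v x₀⟫_ℝ ≤ C * ‖y‖ ^ 2)
    (huv : ∀ y : EuclideanSpace ℝ (Fin n), ‖y‖ ≤ r → |u (x₀ + y) - v (x₀ + y)| ≤ δ) :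
    (∀ lam : ℝ, 0 < lam → lam ≤ r →
      ‖gradient u x₀ - gradient v x₀‖ ≤ 2 * δ / lam + C * lam) ∧
    (Real.sqrt δ ≤ r → ‖gradient u x₀ - gradient v x₀‖ ≤ (2 + C) * Real.sqrt δ) := by
  set g := gradient u x₀ - gradient v x₀ with hg
  have key : ∀ y : EuclideanSpace ℝ (Fin n), ‖y‖ ≤ r →
      ⟪y, g⟫_ℝ ≤ 2 * δ + C * ‖y‖ ^ 2 := by
    intro y hyr
    have h1 : ⟪y, gradient u x₀⟫_ℝ ≤ u (x₀ + y) - u x₀ := subgrad x₀ u hu hdu y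
    have h2 := hv y hyr
    have h3 := huv y hyr
    have h4 := huv 0 (by simpa using le_of_lt hr)
    rw [abs_le] at h3 h4
    have hx0 : x₀ + (0 : EuclideanSpace ℝ (Fin n)) = x₀ := by simp
    rw [hx0] at h4
    have : ⟪y, g⟫_ℝ = ⟪y, gradient u x₀⟫_ℝ - ⟪y, gradient v x₀⟫_ℝ := by
      rw [hg, inner_sub_right]
    rw [this]
    linarith [h3.1, h3.2, h4.1, h4.2]
  have main : ∀ lam : ℝ, 0 < lam → lam ≤ r → ‖g‖ ≤ 2 * δ / lam + C * lam := by
    intro lam hlam hlamr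
    rcases eq_or_ne g 0 with hg0 | hg0
    · rw [hg0, norm_zero]
      positivity
    · have hng : 0 < ‖g‖ := norm_pos_iff.mpr hg0
      set y := (lam / ‖g‖) • g with hy
      have hny : ‖y‖ = lam := by
        rw [hy, norm_smul, Real.norm_eq_abs, abs_div, abs_of_pos hlam,
          abs_of_pos hng, div_mul_cancel₀ _ (ne_of_gt hng)]
      have hinner : ⟪y, g⟫_ℝ = lam * ‖g‖ := by
        rw [hy, real_inner_smul_left, real_inner_self_eq_norm_sq]
        field_simp
      have := key y (hny ▸ hlamr)
      rw [hinner, hny] at this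
      have h8 : 2 * δ / lam + C * lam = (2 * δ + C * lam ^ 2) / lam := by
        field_simp
      rw [h8, le_div_iff₀ hlam]
      nlinarith
  refine ⟨main, fun hsr => ?_⟩
  rcases eq_or_lt_of_le hδ with hδ0 | hδ0
  · have hs0 : Real.sqrt δ = 0 := by rw [← hδ0, Real.sqrt_zero]
    rw [hs0, mul_zero]
    refine le_of_forall_pos_le_add (fun ε hε => ?_)
    set lam := min r (ε / (C + 1)) with hlam
    have hlam0 : 0 < lam := lt_min hr (by positivity)
    have := main lam hlam0 (min_le_left _ _)
    rw [← hδ0] at this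
    have h6 : C * lam ≤ ε := by
      calc C * lam ≤ C * (ε / (C + 1)) := by
            exact mul_le_mul_of_nonneg_left (min_le_right _ _) hC
        _ ≤ ε := by
            rw [div_eq_mul_inv, ← mul_assoc]
            have : C * ε ≤ (C + 1) * ε := by nlinarith
            calc C * ε * (C + 1)⁻¹ ≤ (C + 1) * ε * (C + 1)⁻¹ := by
                  apply mul_le_mul_of_nonneg_right this; positivity
              _ = ε := by field_simp
    simp only [mul_zero, zero_div, zero_add] at this
    linarith
  · have hs : 0 < Real.sqrt δ := Real.sqrt_pos.mpr hδ0
    have := main (Real.sqrt δ) hs hsr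
    have h7 : 2 * δ / Real.sqrt δ = 2 * Real.sqrt δ := by
      rw [mul_div_assoc, Real.div_sqrt]
    rw [h7] at this
    linarith
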